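/- (Inner jump condition.) Suppose the WENO weights at both interfaces are consistent, i.e. 0 ≤ w_0, w_1 ≤ 1 with w_0 + w_1 = 1 and 0 ≤ w̃'_0, w̃'_1 ≤ 1 with w̃'_0 + w̃'_1 = 1. Then the inner jump satisfies the exact identity z^-_{i+1/2} - z^+_{i-1/2} = ((w_0 + w̃'_0)·Δz_{i+1/2} + (w_1 + w̃'_1)·Δz_{i-1/2})/2, and consequently: if Δz_{i+1/2} > 0 and Δz_{i-1/2} > 0 then z^-_{i+1/2} - z^+_{i-1/2} > 0, and if Δz_{i+1/2} < 0 and Δz_{i-1/2} < 0 then z^-_{i+1/2} - z^+_{i-1/2} < 0. Thus consistent weights automatically make the reconstruction locally monotonicity-preserving. -/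
import Mathlib


theorem weno_key (a b x y : ℝ) (ha : 0 ≤ a) (hb : 0 ≤ b) (hab : a + b = 2)
    (hx : 0 < x) (hy : 0 < y) : 0 < a*x + b*y := by
  rcases le_total x y with h | h
  · nlinarith
  · nlinarith

/-- Inner jump condition: with consistent weights at both
interfaces, the inner jump `z⁻_{i+1/2} - z⁺_{i-1/2}` equals
`((w₀ + w̃'₀)Δz_{i+1/2} + (w₁ + w̃'₁)Δz_{i-1/2})/2`; consequently it is
positive when both undivided jumps are positive and negative when both are
negative (local monotonicity preservation). -/
theorem weno_inner_jump (zm z0 z1 w0 w1 w0' w1' : ℝ)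
    (hw : w0 + w1 = 1) (hw0 : 0 ≤ w0) (hw0u : w0 ≤ 1) (hw1 : 0 ≤ w1) (hw1u : w1 ≤ 1)
    (hw' : w0' + w1' = 1) (hw0' : 0 ≤ w0') (hw0u' : w0' ≤ 1)
    (hw1' : 0 ≤ w1') (hw1u' : w1' ≤ 1) :
    (w0*(z0 + z1) + w1*(3*z0 - zm))/2 - (w0'*(3*z0 - z1) + w1'*(zm + z0))/2
      = ((w0 + w0')*(z1 - z0) + (w1 + w1')*(z0 - zm))/2 ∧
    (z1 - z0 > 0 → z0 - zm > 0 →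
      (w0*(z0 + z1) + w1*(3*z0 - zm))/2 - (w0'*(3*z0 - z1) + w1'*(zm + z0))/2 > 0) ∧
    (z1 - z0 < 0 → z0 - zm < 0 →
      (w0*(z0 + z1) + w1*(3*z0 - zm))/2 - (w0'*(3*z0 - z1) + w1'*(zm + z0))/2 < 0) := by
  have hid : (w0*(z0 + z1) + w1*(3*z0 - zm))/2 - (w0'*(3*z0 - z1) + w1'*(zm + z0))/2
      = ((w0 + w0')*(z1 - z0) + (w1 + w1')*(z0 - zm))/2 := by
    have h1 : w1 = 1 - w0 := by linarith
    have h2 : w1' = 1 - w0' := by linarith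
    subst h1 h2; ring
  refine ⟨hid, ?_, ?_⟩ <;> intro h1 h2 <;> rw [hid]
  · have := weno_key (w0+w0') (w1+w1') (z1-z0) (z0-zm) (by linarith) (by linarith)
      (by linarith) h1 h2
    linarith
  · have := weno_key (w0+w0') (w1+w1') (z0-z1) (zm-z0) (by linarith) (by linarith)
      (by linarith) (by linarith) (by linarith)
    nlinarith
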